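/- lim_{p→∞} (p+2) · ( (8/(p+3))·(p/(p+1))^((p+3)/2) + 2/(p+1) − 4/(p+3) ) = 8/√e − 2, where p ranges over natural numbers tending to infinity. -/

import Mathlib

open Filter Real

lemma ratlim (a b : ℝ) : Tendsto (fun x : ℝ => (x + a) / (x + b)) atTop (nhds 1) := by
  have h : Tendsto (fun x : ℝ => 1 + (a - b) / (x + b)) atTop (nhds 1) := by
    have := (tendsto_inv_atTop_zero.comp (tendsto_atTop_add_const_right atTop b tendsto_id)).const_mul (a - b)
    simpa [div_eq_mul_inv] using this.const_add 1
  refine h.congr' ?_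
  filter_upwards [eventually_gt_atTop (-b)] with x hx
  have : x + b ≠ 0 := by linarith
  field_simp
  ring

lemma keylim : Tendsto (fun x : ℝ => (x / (x + 1)) ^ ((x + 3) / 2)) atTop (nhds (Real.exp (-(1/2)))) := by
  have hlog : Tendsto (fun x : ℝ => ((x + 3) / 2) * Real.log (x / (x + 1))) atTop (nhds (-(1/2))) := by
    have h1 : Tendsto (fun x : ℝ => x * Real.log (1 + 1 / x)) atTop (nhds 1) :=
      tendsto_mul_log_one_add_div_atTop 1
    have h2 : Tendsto (fun x : ℝ => (x + 3) / x) atTop (nhds 1) := by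
      simpa using ratlim 3 0
    have h3 := (h2.mul h1).const_mul (-(1/2) : ℝ)
    rw [show (-(1/2) : ℝ) * (1 * 1) = -(1/2) by ring] at h3
    refine h3.congr' ?_
    filter_upwards [eventually_gt_atTop (0:ℝ)] with x hx
    have hx1 : x + 1 > 0 := by linarith
    have hll : Real.log (x / (x + 1)) = -Real.log (1 + 1/x) := by
      rw [show (1 + 1/x : ℝ) = (x+1)/x by field_simp, ← Real.log_inv]
      congr 1
      field_simp
    rw [hll]
    field_simp
  have := (Real.continuous_exp.tendsto _).comp hlog
  refine this.congr' ?_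
  filter_upwards [eventually_gt_atTop (0:ℝ)] with x hx
  have hx1 : x / (x + 1) > 0 := by positivity
  simp only [Function.comp_apply]
  rw [← Real.log_rpow hx1, Real.exp_log (Real.rpow_pos_of_pos hx1 _)]

theorem stmt_13 :
    Filter.Tendsto (fun p : ℕ =>
      ((p : ℝ) + 2) * (8 / ((p : ℝ) + 3) * ((p : ℝ) / ((p : ℝ) + 1)) ^ (((p : ℝ) + 3) / 2) +
        2 / ((p : ℝ) + 1) - 4 / ((p : ℝ) + 3)))
      Filter.atTop (nhds (8 / Real.sqrt (Real.exp 1) - 2)) := by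
  have hreal : Tendsto (fun x : ℝ => (x + 2) * (8 / (x + 3) * (x / (x + 1)) ^ ((x + 3) / 2) +
      2 / (x + 1) - 4 / (x + 3))) atTop (nhds (8 / Real.sqrt (Real.exp 1) - 2)) := by
    have hA := ((ratlim 2 3).mul keylim).const_mul (8:ℝ)
    have hB := (ratlim 2 1).const_mul (2:ℝ)
    have hC := (ratlim 2 3).const_mul (4:ℝ)
    have h := (hA.add hB).sub hC
    have hval : (8:ℝ) * (1 * Real.exp (-(1/2))) + 2 * 1 - 4 * 1 = 8 / Real.sqrt (Real.exp 1) - 2 := by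
      rw [Real.sqrt_eq_rpow, Real.exp_one_rpow, Real.exp_neg]
      field_simp
      ring
    rw [hval] at h
    refine h.congr' ?_
    filter_upwards [eventually_gt_atTop (0:ℝ)] with x hx
    have h1 : x + 1 ≠ 0 := by linarith
    have h3 : x + 3 ≠ 0 := by linarith
    field_simp
  exact (hreal.comp tendsto_natCast_atTop_atTop)
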